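/- Let ρ₁ and ρ₂ be group homomorphisms from ℤ × ℤ to SU(2) such that trace(ρ₁(x)) = trace(ρ₂(x)) for every x ∈ ℤ × ℤ. Then ρ₁ and ρ₂ are conjugate: there exists U ∈ SU(2) such that ρ₂(x) = U * ρ₁(x) * U⁻¹ for every x ∈ ℤ × ℤ. -/

import Mathlib

open Matrix Complex

namespace Stmt12Aux

local notation "SU2" => Matrix.specialUnitaryGroup (Fin 2) ℂ
local notation "M2" => Matrix (Fin 2) (Fin 2) ℂ
local notation "conj" => starRingEnd ℂ

lemma mk_eq {w x y z w' x' y' z' : ℂ} (h1 : w = w') (h2 : x = x') (h3 : y = y')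
    (h4 : z = z') : (!![w, x; y, z] : M2) = !![w', x'; y', z'] := by
  rw [h1, h2, h3, h4]

lemma su2_mul_star {A : M2} (h : A ∈ SU2) : A * star A = 1 :=
  (Matrix.mem_unitaryGroup_iff.mp (Matrix.mem_specialUnitaryGroup_iff.mp h).1)

lemma su2_star_mul {A : M2} (h : A ∈ SU2) : star A * A = 1 :=
  (Matrix.mem_unitaryGroup_iff'.mp (Matrix.mem_specialUnitaryGroup_iff.mp h).1)

lemma su2_det {A : M2} (h : A ∈ SU2) : A.det = 1 :=
  (Matrix.mem_specialUnitaryGroup_iff.mp h).2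

lemma su2_star_mem {A : M2} (h : A ∈ SU2) : star A ∈ SU2 := by
  rw [Matrix.mem_specialUnitaryGroup_iff] at h ⊢
  refine ⟨Matrix.mem_unitaryGroup_iff.mpr ?_, ?_⟩
  · rw [star_star]; exact Matrix.mem_unitaryGroup_iff'.mp h.1
  · rw [Matrix.star_eq_conjTranspose, Matrix.det_conjTranspose, h.2, star_one]

lemma star_fin_two (w x y z : ℂ) :
    star (!![w, x; y, z] : M2) = !![conj w, conj y; conj x, conj z] := by
  ext i j
  rw [Matrix.star_eq_conjTranspose, Matrix.conjTranspose_apply]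
  fin_cases i <;> fin_cases j <;> simp [Complex.star_def]

lemma su2_star_eq_adjugate {A : M2} (h : A ∈ SU2) : star A = A.adjugate := by
  have h2 : A * A.adjugate = 1 := by rw [Matrix.mul_adjugate, su2_det h, one_smul]
  calc star A = star A * (A * A.adjugate) := by rw [h2, mul_one]
    _ = (star A * A) * A.adjugate := by rw [mul_assoc]
    _ = A.adjugate := by rw [su2_star_mul h, one_mul]

lemma su2_entries {A : M2} (h : A ∈ SU2) :
    A 1 0 = -conj (A 0 1) ∧ A 1 1 = conj (A 0 0) ∧
      A 0 0 * conj (A 0 0) + A 0 1 * conj (A 0 1) = 1 := by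
  have hadj := su2_star_eq_adjugate h
  rw [Matrix.adjugate_fin_two] at hadj
  have h10 : conj (A 1 0) = -A 0 1 := by
    have := congrFun (congrFun hadj 0) 1
    simpa [Matrix.star_eq_conjTranspose, Matrix.conjTranspose_apply, Complex.star_def]
      using this
  have h11 : conj (A 0 0) = A 1 1 := by
    have := congrFun (congrFun hadj 0) 0
    simpa [Matrix.star_eq_conjTranspose, Matrix.conjTranspose_apply, Complex.star_def]
      using this
  have hdet := su2_det h
  rw [Matrix.det_fin_two] at hdet
  have h10' : A 1 0 = -conj (A 0 1) := by
    rw [← Complex.conj_conj (A 1 0), h10, map_neg]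
  refine ⟨h10', h11.symm, ?_⟩
  rw [h11]
  linear_combination hdet + (A 0 1) * h10'

lemma su2_of_entries (a b : ℂ) (h : a * conj a + b * conj b = 1) :
    !![a, b; -conj b, conj a] ∈ SU2 := by
  have hdet : (!![a, b; -conj b, conj a] : M2).det = 1 := by
    rw [Matrix.det_fin_two_of]; linear_combination h
  rw [Matrix.mem_specialUnitaryGroup_iff]
  refine ⟨Matrix.mem_unitaryGroup_iff.mpr ?_, hdet⟩
  have hstar : star (!![a, b; -conj b, conj a] : M2) = !![conj a, -b; conj b, a] := by
    rw [star_fin_two]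
    exact mk_eq rfl (by rw [map_neg, Complex.conj_conj]) rfl (Complex.conj_conj a)
  rw [hstar, Matrix.mul_fin_two, Matrix.one_fin_two]
  exact mk_eq (by linear_combination h) (by ring) (by ring) (by linear_combination h)

lemma exists_eigen (a : ℂ) (h : a.re ^ 2 ≤ 1) :
    ∃ l : ℂ, l * conj l = 1 ∧ l + conj l = a + conj a := by
  set t := Real.sqrt (1 - a.re ^ 2) with ht_def
  have ht : t ^ 2 = 1 - a.re ^ 2 := Real.sq_sqrt (by linarith)
  set l : ℂ := (a.re : ℂ) + (t : ℂ) * I with hl_def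
  have hconj : conj l = (a.re : ℂ) - (t : ℂ) * I := by
    rw [hl_def, map_add, _root_.map_mul, Complex.conj_ofReal, Complex.conj_ofReal, Complex.conj_I]
    ring
  refine ⟨l, ?_, ?_⟩
  · rw [hconj, hl_def]
    have h2 : ((a.re : ℂ)) ^ 2 + ((t : ℂ)) ^ 2 = 1 := by
      have : a.re ^ 2 + t ^ 2 = 1 := by rw [ht]; ring
      exact_mod_cast this
    linear_combination h2 - ((t : ℂ) ^ 2) * Complex.I_sq
  · rw [hconj, hl_def, Complex.add_conj]
    push_cast
    ring

lemma norm_le_one {A : M2} (h : A ∈ SU2) : (A 0 0).re ^ 2 ≤ 1 := by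
  obtain ⟨-, -, hn⟩ := su2_entries h
  rw [Complex.mul_conj, Complex.mul_conj] at hn
  have hn' : Complex.normSq (A 0 0) + Complex.normSq (A 0 1) = 1 := by exact_mod_cast hn
  have h1 : (A 0 0).re ^ 2 ≤ Complex.normSq (A 0 0) := by
    rw [Complex.normSq_apply]; nlinarith [sq_nonneg (A 0 0).im]
  nlinarith [Complex.normSq_nonneg (A 0 1)]

/-- conjugation computation helper -/
lemma conj_mul {V A B : M2} (hV : V ∈ SU2) :
    (star V * A * V) * (star V * B * V) = star V * (A * B) * V := by
  have h := su2_mul_star hV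
  simp only [← mul_assoc]
  rw [mul_assoc (star V * A) V (star V), h, mul_one]

lemma conj_unconj {V : M2} (hV : V ∈ SU2) (X : M2) : V * (star V * X * V) * star V = X := by
  have h := su2_mul_star hV
  simp only [← mul_assoc]
  rw [h, one_mul, mul_assoc, h, mul_one]

/-- Diagonalization of a single SU(2) matrix. -/
lemma diag1 {A : M2} (hA : A ∈ SU2) :
    ∃ V ∈ SU2, ∃ p : ℂ, star V * A * V = !![p, 0; 0, conj p] := by
  obtain ⟨h10, h11, hn⟩ := su2_entries hA
  set a := A 0 0 with ha
  set b := A 0 1 with hb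
  have hA_eta : A = !![a, b; -conj b, conj a] := by
    rw [Matrix.eta_fin_two A]
    exact mk_eq rfl rfl h10 h11
  by_cases hb0 : b = 0
  · refine ⟨1, one_mem _, a, ?_⟩
    rw [star_one, one_mul, mul_one, hA_eta, hb0]
    exact mk_eq rfl rfl (by simp) rfl
  · obtain ⟨l, hl1, hl2⟩ := exists_eigen a (norm_le_one hA)
    set s : ℝ := Real.sqrt (Complex.normSq b + Complex.normSq (l - a)) with hs_def
    have hbpos : 0 < Complex.normSq b := Complex.normSq_pos.mpr hb0
    have hspos : 0 < s := Real.sqrt_pos.mpr (add_pos_of_pos_of_nonneg hbpos (Complex.normSq_nonneg _))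
    have hs2 : (s : ℂ) * (s : ℂ) = (Complex.normSq b : ℂ) + (Complex.normSq (l - a) : ℂ) := by
      have : s * s = Complex.normSq b + Complex.normSq (l - a) :=
        Real.mul_self_sqrt (add_nonneg (Complex.normSq_nonneg _) (Complex.normSq_nonneg _))
      exact_mod_cast this
    set u : ℂ := (s : ℂ)⁻¹ with hu_def
    have hsne : (s : ℂ) ≠ 0 := by exact_mod_cast hspos.ne'
    have hus : u * (s : ℂ) = 1 := inv_mul_cancel₀ hsne
    have hcu : conj u = u := by
      rw [hu_def, map_inv₀, Complex.conj_ofReal]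
    have hclc : conj (l - a) = conj l - conj a := map_sub conj l a
    have hbc : b * conj b + (l - a) * conj (l - a) = (s : ℂ) * (s : ℂ) := by
      rw [Complex.mul_conj, Complex.mul_conj, hs2]
    set U : M2 := !![u * b, -(u * conj (l - a)); u * (l - a), u * conj b] with hU_def
    have hUcond : (u * b) * conj (u * b)
        + (-(u * conj (l - a))) * conj (-(u * conj (l - a))) = 1 := by
      rw [map_neg, _root_.map_mul, _root_.map_mul, hcu, Complex.conj_conj]
      linear_combination (u * u) * hbc + ((s:ℂ) * u + 1) * hus
    have hU : U ∈ SU2 := by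
      have := su2_of_entries (u * b) (-(u * conj (l - a))) hUcond
      have heq : (!![u * b, -(u * conj (l - a));
          -conj (-(u * conj (l - a))), conj (u * b)] : M2) = U := by
        rw [hU_def]
        refine mk_eq rfl rfl ?_ ?_
        · rw [map_neg, _root_.map_mul, hcu, Complex.conj_conj, neg_neg]
        · rw [_root_.map_mul, hcu]
      rwa [heq] at this
    have key : A * U = U * !![l, 0; 0, conj l] := by
      rw [hA_eta, hU_def, Matrix.mul_fin_two, Matrix.mul_fin_two]
      refine mk_eq ?_ ?_ ?_ ?_
      · ring
      · rw [hclc]; linear_combination u * hn - u * hl1 + (u * conj l) * hl2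
      · linear_combination u * hl1 - u * hn - (u * l) * hl2
      · rw [hclc]; ring
    refine ⟨U, hU, l, ?_⟩
    calc star U * A * U = star U * (A * U) := by rw [mul_assoc]
      _ = star U * (U * !![l, 0; 0, conj l]) := by rw [key]
      _ = (star U * U) * !![l, 0; 0, conj l] := by rw [mul_assoc]
      _ = !![l, 0; 0, conj l] := by rw [su2_star_mul hU, one_mul]

/-- Simultaneous diagonalization of two commuting SU(2) matrices. -/
lemma diag2 {A B : M2} (hA : A ∈ SU2) (hB : B ∈ SU2) (hcomm : A * B = B * A) :
    ∃ V ∈ SU2, ∃ p q : ℂ,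
      star V * A * V = !![p, 0; 0, conj p] ∧ star V * B * V = !![q, 0; 0, conj q] := by
  obtain ⟨V, hV, l, hD⟩ := diag1 hA
  set B' : M2 := star V * B * V with hB'_def
  have hB' : B' ∈ SU2 := mul_mem (mul_mem (su2_star_mem hV) hB) hV
  have hcomm' : (!![l, 0; 0, conj l] : M2) * B' = B' * !![l, 0; 0, conj l] := by
    rw [← hD, hB'_def, conj_mul hV, conj_mul hV, hcomm]
  by_cases hll : l = conj l
  · -- A is a scalar matrix
    have hA_eq : A = !![l, 0; 0, conj l] := by
      have h1 : A = V * (star V * A * V) * star V := (conj_unconj hV A).symm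
      rw [hD] at h1
      rw [h1]
      have hsc : ∀ X : M2, (!![l, 0; 0, conj l] : M2) * X = X * !![l, 0; 0, conj l] := by
        intro X
        rw [Matrix.eta_fin_two X, Matrix.mul_fin_two, Matrix.mul_fin_two]
        exact mk_eq (by ring) (by rw [← hll]; ring) (by rw [← hll]; ring) (by ring)
      rw [← hsc V, mul_assoc, su2_mul_star hV, mul_one]
    obtain ⟨W, hW, m, hDW⟩ := diag1 hB
    refine ⟨W, hW, l, m, ?_, hDW⟩
    rw [hA_eq]
    have hsc : ∀ X : M2, (!![l, 0; 0, conj l] : M2) * X = X * !![l, 0; 0, conj l] := by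
      intro X
      rw [Matrix.eta_fin_two X, Matrix.mul_fin_two, Matrix.mul_fin_two]
      exact mk_eq (by ring) (by rw [← hll]; ring) (by rw [← hll]; ring) (by ring)
    rw [← hsc (star W), mul_assoc, su2_star_mul hW, mul_one]
  · -- the diagonal entries of A's diagonal form are distinct, so B' is diagonal too
    have e01 : B' 0 1 = 0 := by
      have h1 := congrFun (congrFun hcomm' 0) 1
      simp [Matrix.mul_apply, Fin.sum_univ_two] at h1
      by_contra hx
      rw [mul_comm] at h1
      exact hll (mul_left_cancel₀ hx h1)
    have e10 : B' 1 0 = 0 := by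
      have h1 := congrFun (congrFun hcomm' 1) 0
      simp [Matrix.mul_apply, Fin.sum_univ_two] at h1
      by_contra hx
      rw [mul_comm (conj l) (B' 1 0)] at h1
      exact hll (mul_left_cancel₀ hx h1.symm)
    obtain ⟨-, hd11, -⟩ := su2_entries hB'
    refine ⟨V, hV, l, B' 0 0, hD, ?_⟩
    rw [← hB'_def, Matrix.eta_fin_two B']
    exact mk_eq rfl e01 e10 hd11

/-- scalar dichotomy -/
lemma dich {p q : ℂ} (hp : p * conj p = 1) (hq : q * conj q = 1)
    (ht : p + conj p = q + conj q) : q = p ∨ q = conj p := by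
  have hre : p.re = q.re := by
    rw [Complex.add_conj, Complex.add_conj] at ht
    have := Complex.ofReal_injective ht
    linarith
  have hnp : Complex.normSq p = 1 := by
    rw [Complex.mul_conj] at hp; exact_mod_cast hp
  have hnq : Complex.normSq q = 1 := by
    rw [Complex.mul_conj] at hq; exact_mod_cast hq
  rw [Complex.normSq_apply] at hnp hnq
  have him : (q.im - p.im) * (q.im + p.im) = 0 := by
    rw [hre] at hnp
    linear_combination hnq - hnp
  rcases mul_eq_zero.mp him with h | h
  · left; exact Complex.ext hre.symm (by linarith)
  · right; exact Complex.ext (by rw [Complex.conj_re, hre]) (by rw [Complex.conj_im]; linarith)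

/-- induction principle for `Multiplicative (ℤ × ℤ)` -/
lemma ind_principle (P : Multiplicative (ℤ × ℤ) → Prop) (h1 : P 1)
    (hmul : ∀ x y, P x → P y → P (x * y)) (hinv : ∀ x, P x → P x⁻¹)
    (hg : P (Multiplicative.ofAdd (1, 0))) (hh : P (Multiplicative.ofAdd (0, 1))) :
    ∀ x, P x := by
  intro x
  have hz : ∀ z : Multiplicative (ℤ × ℤ), P z → ∀ m : ℤ, P (z ^ m) := by
    intro z hzP m
    have hn : ∀ n : ℕ, P (z ^ n) := by
      intro n
      induction n with
      | zero => simpa using h1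
      | succ k ih => rw [pow_succ]; exact hmul _ _ ih hzP
    rcases le_or_gt 0 m with hm | hm
    · lift m to ℕ using hm
      rw [zpow_natCast]; exact hn m
    · obtain ⟨n, rfl⟩ : ∃ n : ℕ, m = -(n : ℤ) := ⟨m.natAbs, by omega⟩
      rw [_root_.zpow_neg, zpow_natCast]; exact hinv _ (hn n)
  have hx : x = Multiplicative.ofAdd ((1 : ℤ), (0 : ℤ)) ^ (Multiplicative.toAdd x).1 *
      Multiplicative.ofAdd ((0 : ℤ), (1 : ℤ)) ^ (Multiplicative.toAdd x).2 := by
    rw [← ofAdd_zsmul, ← ofAdd_zsmul, ← ofAdd_add, ← ofAdd_toAdd x]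
    congr 1
    rw [toAdd_ofAdd]
    ext <;> simp
  rw [hx]
  exact hmul _ _ (hz _ hg _) (hz _ hh _)

lemma diag_mul (p q : ℂ) :
    (!![p, 0; 0, conj p] : M2) * !![q, 0; 0, conj q] = !![p * q, 0; 0, conj (p * q)] := by
  rw [Matrix.mul_fin_two]
  exact mk_eq (by ring) (by ring) (by ring) (by rw [_root_.map_mul]; ring)

lemma diag_star (p : ℂ) :
    star (!![p, 0; 0, conj p] : M2) = !![conj p, 0; 0, conj (conj p)] := by
  rw [star_fin_two]
  exact mk_eq rfl (by simp) (by simp) rfl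

lemma diag_swap (p : ℂ) :
    (!![(0 : ℂ), 1; -1, 0] : M2) * !![p, 0; 0, conj p] * star (!![(0 : ℂ), 1; -1, 0] : M2) =
      !![conj p, 0; 0, conj (conj p)] := by
  have hsW : star (!![(0 : ℂ), 1; -1, 0] : M2) = !![0, -1; 1, 0] := by
    rw [star_fin_two]
    exact mk_eq (by simp) (by simp) (by simp) (by simp)
  rw [hsW, Matrix.mul_fin_two, Matrix.mul_fin_two, Complex.conj_conj]
  exact mk_eq (by ring) (by ring) (by ring) (by ring)

lemma W_mem : (!![(0 : ℂ), 1; -1, 0] : M2) ∈ SU2 := by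
  have := su2_of_entries 0 1 (by simp)
  have heq : (!![(0 : ℂ), 1; -conj 1, conj 0] : M2) = !![0, 1; -1, 0] :=
    mk_eq rfl rfl (by simp) (by simp)
  rwa [heq] at this

lemma diag_norm {p : ℂ} (h : (!![p, 0; 0, conj p] : M2) ∈ SU2) : p * conj p = 1 := by
  obtain ⟨-, -, hn⟩ := su2_entries h
  simpa using hn

lemma diag_trace (p : ℂ) : (!![p, 0; 0, conj p] : M2).trace = p + conj p := by
  rw [Matrix.trace_fin_two]
  simp

lemma diag_inj {p q : ℂ} (h : (!![p, 0; 0, conj p] : M2) = !![q, 0; 0, conj q]) : p = q := by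
  have := congrFun (congrFun h 0) 0
  simpa using this

lemma trace_conj {V : M2} (hV : V ∈ SU2) (X : M2) : (star V * X * V).trace = X.trace := by
  rw [Matrix.trace_mul_cycle, su2_mul_star hV, one_mul]

lemma hom_diag_all {ρ : Multiplicative (ℤ × ℤ) →* Matrix.specialUnitaryGroup (Fin 2) ℂ}
    {V : M2} (hV : V ∈ SU2)
    (hg : ∃ p : ℂ, star V * (ρ (Multiplicative.ofAdd (1, 0)) : M2) * V = !![p, 0; 0, conj p])
    (hh : ∃ p : ℂ, star V * (ρ (Multiplicative.ofAdd (0, 1)) : M2) * V = !![p, 0; 0, conj p]) :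
    ∀ x, ∃ p : ℂ, star V * (ρ x : M2) * V = !![p, 0; 0, conj p] := by
  refine ind_principle _ ?_ ?_ ?_ hg hh
  · refine ⟨1, ?_⟩
    rw [_root_.map_one, OneMemClass.coe_one, mul_one, su2_star_mul hV, Matrix.one_fin_two]
    exact mk_eq rfl rfl rfl (by simp)
  · rintro x y ⟨p, hp⟩ ⟨q, hq⟩
    refine ⟨p * q, ?_⟩
    rw [_root_.map_mul, MulMemClass.coe_mul, ← diag_mul, ← hp, ← hq, conj_mul hV]
  · rintro x ⟨p, hp⟩
    have hmem : star V * (ρ x : M2) * V ∈ SU2 :=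
      mul_mem (mul_mem (su2_star_mem hV) (SetLike.coe_mem (ρ x))) hV
    have hinv1 : (star V * (ρ x : M2) * V) * (star V * (ρ x⁻¹ : M2) * V) = 1 := by
      rw [conj_mul hV, ← MulMemClass.coe_mul, ← _root_.map_mul, mul_inv_cancel, _root_.map_one,
        OneMemClass.coe_one, mul_one, su2_star_mul hV]
    have hst : star V * (ρ x⁻¹ : M2) * V = star (star V * (ρ x : M2) * V) := by
      calc star V * (ρ x⁻¹ : M2) * V
          = (star (star V * (ρ x : M2) * V) * (star V * (ρ x : M2) * V))
              * (star V * (ρ x⁻¹ : M2) * V) := by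
            rw [su2_star_mul hmem, one_mul]
        _ = star (star V * (ρ x : M2) * V) * ((star V * (ρ x : M2) * V)
              * (star V * (ρ x⁻¹ : M2) * V)) := by rw [mul_assoc]
        _ = star (star V * (ρ x : M2) * V) := by rw [hinv1, mul_one]
    rw [hst, hp, diag_star]
    exact ⟨conj p, rfl⟩

end Stmt12Aux

open Stmt12Aux in
/-- Two representations of `ℤ × ℤ` into SU(2) with equal traces are conjugate: there is
`U ∈ SU(2)` with `ρ₂ x = U * ρ₁ x * U⁻¹` for all `x`. -/
theorem stmt_12
    (ρ₁ ρ₂ : Multiplicative (ℤ × ℤ) →* Matrix.specialUnitaryGroup (Fin 2) ℂ)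
    (htr : ∀ x : Multiplicative (ℤ × ℤ),
      ((ρ₁ x : Matrix (Fin 2) (Fin 2) ℂ)).trace = ((ρ₂ x : Matrix (Fin 2) (Fin 2) ℂ)).trace) :
    ∃ U : Matrix (Fin 2) (Fin 2) ℂ, U ∈ Matrix.specialUnitaryGroup (Fin 2) ℂ ∧
      ∀ x : Multiplicative (ℤ × ℤ),
        (ρ₂ x : Matrix (Fin 2) (Fin 2) ℂ) = U * (ρ₁ x : Matrix (Fin 2) (Fin 2) ℂ) * U⁻¹ := by
  classical
  have hcomm : ∀ ρ : Multiplicative (ℤ × ℤ) →* Matrix.specialUnitaryGroup (Fin 2) ℂ,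
      (ρ (Multiplicative.ofAdd ((1 : ℤ), (0 : ℤ))) : Matrix (Fin 2) (Fin 2) ℂ)
        * (ρ (Multiplicative.ofAdd ((0 : ℤ), (1 : ℤ))) : Matrix (Fin 2) (Fin 2) ℂ)
      = (ρ (Multiplicative.ofAdd ((0 : ℤ), (1 : ℤ))) : Matrix (Fin 2) (Fin 2) ℂ)
        * (ρ (Multiplicative.ofAdd ((1 : ℤ), (0 : ℤ))) : Matrix (Fin 2) (Fin 2) ℂ) := by
    intro ρ
    have hc : ρ (Multiplicative.ofAdd ((1 : ℤ), (0 : ℤ)))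
          * ρ (Multiplicative.ofAdd ((0 : ℤ), (1 : ℤ)))
        = ρ (Multiplicative.ofAdd ((0 : ℤ), (1 : ℤ)))
          * ρ (Multiplicative.ofAdd ((1 : ℤ), (0 : ℤ))) := by
      rw [← _root_.map_mul ρ, ← _root_.map_mul ρ,
        mul_comm (Multiplicative.ofAdd ((1 : ℤ), (0 : ℤ)))]
    rw [← MulMemClass.coe_mul, ← MulMemClass.coe_mul, hc]
  obtain ⟨V₁, hV₁, p₁, q₁, hA₁, hB₁⟩ :=
    diag2 (SetLike.coe_mem (ρ₁ (Multiplicative.ofAdd ((1 : ℤ), (0 : ℤ)))))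
      (SetLike.coe_mem (ρ₁ (Multiplicative.ofAdd ((0 : ℤ), (1 : ℤ))))) (hcomm ρ₁)
  obtain ⟨V₂, hV₂, p₂, q₂, hA₂, hB₂⟩ :=
    diag2 (SetLike.coe_mem (ρ₂ (Multiplicative.ofAdd ((1 : ℤ), (0 : ℤ)))))
      (SetLike.coe_mem (ρ₂ (Multiplicative.ofAdd ((0 : ℤ), (1 : ℤ))))) (hcomm ρ₂)
  have h1all := hom_diag_all hV₁ ⟨p₁, hA₁⟩ ⟨q₁, hB₁⟩ (ρ := ρ₁)
  have h2all := hom_diag_all hV₂ ⟨p₂, hA₂⟩ ⟨q₂, hB₂⟩ (ρ := ρ₂)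
  -- membership of the conjugated matrices
  have hmem₁ : ∀ x, star V₁ * (ρ₁ x : Matrix (Fin 2) (Fin 2) ℂ) * V₁ ∈ Matrix.specialUnitaryGroup (Fin 2) ℂ := fun x =>
    mul_mem (mul_mem (su2_star_mem hV₁) (SetLike.coe_mem (ρ₁ x))) hV₁
  have hmem₂ : ∀ x, star V₂ * (ρ₂ x : Matrix (Fin 2) (Fin 2) ℂ) * V₂ ∈ Matrix.specialUnitaryGroup (Fin 2) ℂ := fun x =>
    mul_mem (mul_mem (su2_star_mem hV₂) (SetLike.coe_mem (ρ₂ x))) hV₂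
  -- key dichotomy
  have hstep : ∀ x, ∀ p q : ℂ,
      star V₁ * (ρ₁ x : Matrix (Fin 2) (Fin 2) ℂ) * V₁ = !![p, 0; 0, (starRingEnd ℂ) p] →
      star V₂ * (ρ₂ x : Matrix (Fin 2) (Fin 2) ℂ) * V₂ = !![q, 0; 0, (starRingEnd ℂ) q] →
      (p * (starRingEnd ℂ) p = 1 ∧ q * (starRingEnd ℂ) q = 1
        ∧ (q = p ∨ q = (starRingEnd ℂ) p)) := by
    intro x p q hp hq
    have hpn : p * (starRingEnd ℂ) p = 1 := diag_norm (hp ▸ hmem₁ x)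
    have hqn : q * (starRingEnd ℂ) q = 1 := diag_norm (hq ▸ hmem₂ x)
    have htrx : p + (starRingEnd ℂ) p = q + (starRingEnd ℂ) q := by
      rw [← diag_trace p, ← diag_trace q, ← hp, ← hq, trace_conj hV₁, trace_conj hV₂]
      exact htr x
    exact ⟨hpn, hqn, dich hpn hqn htrx⟩
  have key : (∀ x, ∃ p : ℂ, star V₁ * (ρ₁ x : Matrix (Fin 2) (Fin 2) ℂ) * V₁
        = !![p, 0; 0, (starRingEnd ℂ) p]
      ∧ star V₂ * (ρ₂ x : Matrix (Fin 2) (Fin 2) ℂ) * V₂ = !![p, 0; 0, (starRingEnd ℂ) p]) ∨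
    (∀ x, ∃ p : ℂ, star V₁ * (ρ₁ x : Matrix (Fin 2) (Fin 2) ℂ) * V₁
        = !![p, 0; 0, (starRingEnd ℂ) p]
      ∧ star V₂ * (ρ₂ x : Matrix (Fin 2) (Fin 2) ℂ) * V₂
        = !![(starRingEnd ℂ) p, 0; 0, (starRingEnd ℂ) ((starRingEnd ℂ) p)]) := by
    by_contra hcon
    push_neg at hcon
    obtain ⟨⟨x, hx⟩, ⟨y, hy⟩⟩ := hcon
    obtain ⟨p, hp⟩ := h1all x
    obtain ⟨q, hq⟩ := h2all x
    obtain ⟨hpn, hqn, hd⟩ := hstep x p q hp hq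
    have hqcp : q = (starRingEnd ℂ) p := by
      rcases hd with h | h
      · exact absurd (h ▸ hq) (hx p hp)
      · exact h
    have hpne : (starRingEnd ℂ) p ≠ p := by
      intro hc
      exact (hx p hp) (by rw [hqcp, hc] at hq; exact hq)
    obtain ⟨p', hp'⟩ := h1all y
    obtain ⟨q', hq'⟩ := h2all y
    obtain ⟨hpn', hqn', hd'⟩ := hstep y p' q' hp' hq'
    have hq'p : q' = p' := by
      rcases hd' with h | h
      · exact h
      · exact absurd (h ▸ hq') (hy p' hp')
    have hp'ne : p' ≠ (starRingEnd ℂ) p' := by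
      intro hc
      exact (hy p' hp') (by rw [hq'p, hc] at hq'; exact hq')
    -- now consider x * y
    obtain ⟨r, hr⟩ := h1all (x * y)
    obtain ⟨s, hs⟩ := h2all (x * y)
    obtain ⟨hrn, hsn, hds⟩ := hstep (x * y) r s hr hs
    have hr_eq : r = p * p' := by
      apply diag_inj
      rw [← hr, _root_.map_mul, MulMemClass.coe_mul, ← diag_mul, ← hp, ← hp', conj_mul hV₁]
    have hs_eq : s = q * q' := by
      apply diag_inj
      rw [← hs, _root_.map_mul, MulMemClass.coe_mul, ← diag_mul, ← hq, ← hq', conj_mul hV₂]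
    have hp'0 : p' ≠ 0 := left_ne_zero_of_mul_eq_one hpn'
    have hcp0 : (starRingEnd ℂ) p ≠ 0 := right_ne_zero_of_mul_eq_one hpn
    rcases hds with h | h
    · -- s = r : conj p * p' = p * p'
      apply hpne
      have h2 : q * q' = p * p' := by rw [← hr_eq, ← h, hs_eq]
      rw [hqcp, hq'p] at h2
      exact mul_right_cancel₀ hp'0 h2
    · -- s = conj r
      apply hp'ne
      have h2 : q * q' = (starRingEnd ℂ) (p * p') := by rw [← hr_eq, ← h, hs_eq]
      rw [hqcp, hq'p, _root_.map_mul] at h2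
      exact mul_left_cancel₀ hcp0 h2
  -- build the intertwiner C between the diagonal forms
  obtain ⟨C, hCmem, hC⟩ : ∃ C : Matrix (Fin 2) (Fin 2) ℂ, C ∈ Matrix.specialUnitaryGroup (Fin 2) ℂ ∧
      ∀ x, star V₂ * (ρ₂ x : Matrix (Fin 2) (Fin 2) ℂ) * V₂
        = C * (star V₁ * (ρ₁ x : Matrix (Fin 2) (Fin 2) ℂ) * V₁) * star C := by
    rcases key with hk | hk
    · refine ⟨1, one_mem _, fun x => ?_⟩
      obtain ⟨p, h1, h2⟩ := hk x
      rw [star_one, mul_one, one_mul, h1, h2]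
    · refine ⟨!![(0 : ℂ), 1; -1, 0], W_mem, fun x => ?_⟩
      obtain ⟨p, h1, h2⟩ := hk x
      rw [h2, h1, diag_swap]
  -- assemble
  refine ⟨V₂ * C * star V₁, ?_, ?_⟩
  · exact mul_mem (mul_mem hV₂ hCmem) (su2_star_mem hV₁)
  · intro x
    have hUmem : V₂ * C * star V₁ ∈ Matrix.specialUnitaryGroup (Fin 2) ℂ := mul_mem (mul_mem hV₂ hCmem) (su2_star_mem hV₁)
    rw [Matrix.inv_eq_right_inv (su2_mul_star hUmem)]
    have h2 : (ρ₂ x : Matrix (Fin 2) (Fin 2) ℂ)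
        = V₂ * (star V₂ * (ρ₂ x : Matrix (Fin 2) (Fin 2) ℂ) * V₂) * star V₂ :=
      (conj_unconj hV₂ _).symm
    rw [h2, hC x, Matrix.star_mul, Matrix.star_mul, star_star]
    simp only [mul_assoc]
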